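/- Let S ⊆ ℝⁿ be a nonempty closed convex set and let 𝒜 : ℝⁿ → ℝⁿ be pseudo-monotone. Let x* ∈ S satisfy ⟨𝒜(x*), z − x*⟩ ≥ 0 for all z ∈ S. Let x ∈ ℝⁿ, λ > 0, μ ∈ (0,1), and γ ∈ (0,2). Set y = P_S(x − λ𝒜(x)), assume x ≠ y and λ‖𝒜(x) − 𝒜(y)‖ ≤ μ‖x − y‖, and define d = x − y − λ(𝒜(x) − 𝒜(y)), ρ = ⟨x − y, d⟩/‖d‖², and x⁺ = P_S(x − γλρ𝒜(y)). Then ‖x⁺ − x*‖² ≤ ‖x − x*‖² − ‖x − x⁺ − γρd‖² − (2 − γ)γ · ((1 − μ)⁴/(1 + μ)⁴) · ‖x − y‖². -/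

import Mathlib

open RealInnerProductSpace

set_option maxHeartbeats 1000000

lemma proj_char' {F : Type*} [NormedAddCommGroup F] [InnerProductSpace ℝ F]
    {S : Set F} (hScv : Convex ℝ S) {u v : F} (hv : v ∈ S)
    (hmin : ∀ w ∈ S, ‖u - v‖ ≤ ‖u - w‖) :
    ∀ w ∈ S, ⟪u - v, w - v⟫ ≤ 0 := by
  haveI : Nonempty S := ⟨⟨v, hv⟩⟩
  have h : ‖u - v‖ = ⨅ w : S, ‖u - w‖ := by
    refine le_antisymm (le_ciInf fun w => hmin w w.2) ?_
    have hbdd : BddBelow (Set.range fun w : S => ‖u - w‖) :=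
      ⟨0, by rintro b ⟨w, rfl⟩; exact norm_nonneg _⟩
    exact ciInf_le hbdd ⟨v, hv⟩
  exact (norm_eq_iInf_iff_real_inner_le_zero hScv hv).1 h


/-- inequality (13): combining Lemma 3.1, Lemma 3.2 and
‖d‖ ≥ (1 − μ)‖x − y‖ one gets
‖x⁺ − x*‖² ≤ ‖x − x*‖² − ‖x − x⁺ − γρd‖² − (2 − γ)γ((1 − μ)⁴/(1 + μ)⁴)‖x − y‖². -/
theorem stmt_7 {n : ℕ} (S : Set (EuclideanSpace ℝ (Fin n)))
    (hSne : S.Nonempty) (hScl : IsClosed S) (hScv : Convex ℝ S)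
    (A : EuclideanSpace ℝ (Fin n) → EuclideanSpace ℝ (Fin n))
    (hpm : ∀ a b : EuclideanSpace ℝ (Fin n),
      (0 : ℝ) ≤ inner ℝ (A a) (b - a) → (0 : ℝ) ≤ inner ℝ (A b) (b - a))
    (xs : EuclideanSpace ℝ (Fin n)) (hxsS : xs ∈ S)
    (hxs : ∀ z ∈ S, (0 : ℝ) ≤ inner ℝ (A xs) (z - xs))
    (x y xp : EuclideanSpace ℝ (Fin n))
    (lam μ γ : ℝ) (hlam : 0 < lam) (hμ0 : 0 < μ) (hμ1 : μ < 1)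
    (hγ0 : 0 < γ) (hγ2 : γ < 2)
    (hyS : y ∈ S) (hyproj : ∀ w ∈ S, ‖x - lam • A x - y‖ ≤ ‖x - lam • A x - w‖)
    (hxy : x ≠ y)
    (hls : lam * ‖A x - A y‖ ≤ μ * ‖x - y‖)
    (d : EuclideanSpace ℝ (Fin n)) (hd : d = x - y - lam • (A x - A y))
    (ρ : ℝ) (hρ : ρ = (inner ℝ (x - y) d : ℝ) / ‖d‖ ^ 2)
    (hxpS : xp ∈ S)
    (hxpproj : ∀ w ∈ S,
      ‖x - (γ * lam * ρ) • A y - xp‖ ≤ ‖x - (γ * lam * ρ) • A y - w‖) :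
    ‖xp - xs‖ ^ 2 ≤ ‖x - xs‖ ^ 2 - ‖x - xp - (γ * ρ) • d‖ ^ 2
      - (2 - γ) * γ * ((1 - μ) ^ 4 / (1 + μ) ^ 4) * ‖x - y‖ ^ 2 := by
  have hnxy : 0 < ‖x - y‖ := by rw [norm_pos_iff, sub_ne_zero]; exact hxy
  set c : ℝ := ⟪x - y, d⟫ with hc_def
  have hcval : c = ‖x - y‖ ^ 2 - lam * ⟪x - y, A x - A y⟫ := by
    rw [hc_def, hd, inner_sub_right, real_inner_smul_right, real_inner_self_eq_norm_sq]
  have hcauchy : ⟪x - y, A x - A y⟫ ≤ ‖x - y‖ * ‖A x - A y‖ := real_inner_le_norm _ _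
  have hclb : (1 - μ) * ‖x - y‖ ^ 2 ≤ c := by
    nlinarith [mul_le_mul_of_nonneg_left hcauchy hlam.le,
      mul_le_mul_of_nonneg_left hls hnxy.le]
  have hcpos : 0 < c :=
    lt_of_lt_of_le (mul_pos (by linarith) (pow_pos hnxy 2)) hclb
  have hdne : d ≠ 0 := by
    intro h0
    rw [h0, inner_zero_right] at hc_def
    rw [hc_def] at hcpos; exact lt_irrefl 0 hcpos
  have hdpos : 0 < ‖d‖ := norm_pos_iff.mpr hdne
  have hdub : ‖d‖ ≤ (1 + μ) * ‖x - y‖ := by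
    rw [hd]
    refine (norm_sub_le _ _).trans ?_
    rw [norm_smul, Real.norm_eq_abs, abs_of_pos hlam]
    linarith
  have hρpos : 0 < ρ := by rw [hρ]; exact div_pos hcpos (by positivity)
  have hρd : ρ * ‖d‖ ^ 2 = c := by rw [hρ]; field_simp
  -- projection inequalities
  have h1 : (0:ℝ) ≤ ⟪A y, y - xs⟫ := hpm xs y (hxs y hyS)
  have h2 := proj_char' hScv hyS hyproj xp hxpS
  have h3 := proj_char' hScv hxpS hxpproj xs hxsS
  rw [sub_right_comm, inner_sub_left, real_inner_smul_left] at h2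
  rw [sub_right_comm, inner_sub_left, real_inner_smul_left] at h3
  -- expansions
  have E1 : ‖x - xs‖ ^ 2 = ‖x - xp‖ ^ 2 + 2 * ⟪x - xp, xp - xs⟫ + ‖xp - xs‖ ^ 2 := by
    rw [show x - xs = (x - xp) + (xp - xs) by abel, norm_add_sq_real]
  have E5 : ‖x - xp - (γ * ρ) • d‖ ^ 2
      = ‖x - xp‖ ^ 2 - 2 * (γ * ρ) * ⟪x - xp, d⟫ + (γ * ρ) ^ 2 * ‖d‖ ^ 2 := by
    rw [norm_sub_sq_real, real_inner_smul_right, norm_smul, Real.norm_eq_abs, mul_pow, sq_abs]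
    ring
  have E6 : ⟪x - xp, xp - xs⟫ = -⟪x - xp, xs - xp⟫ := by
    rw [show xp - xs = -(xs - xp) by abel, inner_neg_right]
  have E2 : ⟪A y, xs - xp⟫ = -⟪A y, y - xs⟫ - ⟪A y, xp - y⟫ := by
    rw [show xs - xp = -(y - xs) + -(xp - y) by abel, inner_add_right, inner_neg_right,
      inner_neg_right]
    ring
  have E3 : ⟪d, xp - y⟫
      = ⟪x - y, xp - y⟫ - lam * ⟪A x, xp - y⟫ + lam * ⟪A y, xp - y⟫ := by
    rw [hd]
    simp only [inner_sub_left, real_inner_smul_left]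
    ring
  have E4 : ⟪d, xp - y⟫ = c - ⟪d, x - xp⟫ := by
    rw [show xp - y = (x - y) - (x - xp) by abel, inner_sub_right,
      (real_inner_comm (x - y) d).trans hc_def.symm]
  have E7 : ⟪x - xp, d⟫ = ⟪d, x - xp⟫ := real_inner_comm _ _
  -- key scalar chain
  have step1 : -⟪x - xp, xp - xs⟫ ≤ γ * ρ * ⟪d, x - xp⟫ - γ * ρ ^ 2 * ‖d‖ ^ 2 := by
    have p1 : 0 ≤ γ * lam * ρ * ⟪A y, y - xs⟫ := mul_nonneg (by positivity) h1
    have p2 : γ * ρ * (⟪x - y, xp - y⟫ - lam * ⟪A x, xp - y⟫) ≤ 0 :=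
      mul_nonpos_of_nonneg_of_nonpos (by positivity) h2
    have p3 : γ * lam * ρ * ⟪A y, xs - xp⟫
        = γ * lam * ρ * (-⟪A y, y - xs⟫ - ⟪A y, xp - y⟫) := by rw [E2]
    have p4 : γ * ρ * ⟪d, xp - y⟫
        = γ * ρ * (⟪x - y, xp - y⟫ - lam * ⟪A x, xp - y⟫ + lam * ⟪A y, xp - y⟫) := by
      rw [E3]
    have p5 : γ * ρ * ⟪d, xp - y⟫ = γ * ρ * (c - ⟪d, x - xp⟫) := by rw [E4]
    have p6 : γ * ρ * c = γ * ρ ^ 2 * ‖d‖ ^ 2 := by rw [← hρd]; ring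
    linarith [h3, E6, p1, p2, p3, p4, p5, p6]
  have key : ‖xp - xs‖ ^ 2 ≤ ‖x - xs‖ ^ 2 - ‖x - xp - (γ * ρ) • d‖ ^ 2
      - (2 - γ) * γ * (ρ ^ 2 * ‖d‖ ^ 2) := by
    have E7s : γ * ρ * ⟪x - xp, d⟫ = γ * ρ * ⟪d, x - xp⟫ := by rw [E7]
    linarith [step1, E1, E5, E7s]
  -- final bound:  (2-γ)γ K ‖x-y‖² ≤ (2-γ)γ ρ²‖d‖²
  have hfin : (2 - γ) * γ * ((1 - μ) ^ 4 / (1 + μ) ^ 4) * ‖x - y‖ ^ 2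
      ≤ (2 - γ) * γ * (ρ ^ 2 * ‖d‖ ^ 2) := by
    have hρsq : ρ ^ 2 * ‖d‖ ^ 2 = c ^ 2 / ‖d‖ ^ 2 := by
      rw [hρ]; field_simp
    have hK : ((1 - μ) ^ 4 / (1 + μ) ^ 4) * ‖x - y‖ ^ 2 ≤ c ^ 2 / ‖d‖ ^ 2 := by
      rw [div_mul_eq_mul_div, div_le_div_iff₀ (by positivity) (by positivity)]
      have hd2 : ‖d‖ ^ 2 ≤ (1 + μ) ^ 2 * ‖x - y‖ ^ 2 := by nlinarith
      have hc2 : (1 - μ) ^ 2 * ‖x - y‖ ^ 4 ≤ c ^ 2 := by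
        nlinarith [mul_le_mul hclb hclb
          (mul_nonneg (by linarith : (0:ℝ) ≤ 1 - μ) (by positivity)) hcpos.le]
      have A1 := mul_le_mul_of_nonneg_left hd2
        (by positivity : (0:ℝ) ≤ (1 - μ) ^ 4 * ‖x - y‖ ^ 2)
      have A2 := mul_le_mul_of_nonneg_left hc2 (by positivity : (0:ℝ) ≤ (1 + μ) ^ 4)
      have A3 := mul_le_mul_of_nonneg_left
        (show (1 - μ) ^ 2 ≤ (1 + μ) ^ 2 by nlinarith [hμ0, hμ1])
        (by positivity : (0:ℝ) ≤ (1 - μ) ^ 2 * (1 + μ) ^ 2 * ‖x - y‖ ^ 4)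
      linarith [A1, A2, A3]
    rw [hρsq]
    have hgg : (0:ℝ) ≤ (2 - γ) * γ := mul_nonneg (by linarith) hγ0.le
    have := mul_le_mul_of_nonneg_left hK hgg
    linarith
  linarith
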